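/- Let m ≥ 2, let c ≤ d be real numbers, and let a_1 ≥ … ≥ a_m and b_1 ≥ … ≥ b_m be real numbers, all strictly less than c, such that the vector (a_1,…,a_m) majorizes (b_1,…,b_m) and the two decreasing vectors are distinct. Then the rational function Q(x) := ∏_{j=1}^{m} (x − b_j)/(x − a_j) satisfies Q'(x) < 0 for every x ∈ [c, d]. -/

import Mathlib

open Finset

/-- Abel summation: if `cc` is nonnegative and antitone, the partial sums of `dd`
are nonnegative and the total sum is zero, then `∑ cc * dd ≥ 0`. -/
lemma abel_sum_nonneg (m : ℕ) (cc dd : ℕ → ℝ)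
    (hmono : ∀ i, cc (i + 1) ≤ cc i)
    (hS : ∀ k ≤ m, 0 ≤ ∑ j ∈ range k, dd j)
    (hSm : ∑ j ∈ range m, dd j = 0) :
    0 ≤ ∑ j ∈ range m, cc j * dd j := by
  have h := Finset.sum_range_by_parts cc dd m
  simp only [smul_eq_mul] at h
  rw [h, hSm, mul_zero, zero_sub, neg_nonneg]
  apply Finset.sum_nonpos
  intro i hi
  have him : i + 1 ≤ m := by
    have := Finset.mem_range.mp hi; omega
  have h1 : cc (i + 1) - cc i ≤ 0 := sub_nonpos.mpr (hmono i)
  exact mul_nonpos_of_nonpos_of_nonneg h1 (hS (i + 1) him)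

/-- **The quotient `Q(x) = ∏ (x − bⱼ)/(x − aⱼ)` is strictly decreasing.**
Let `m ≥ 2`, let `c ≤ d` be reals, and let `a₁ ≥ … ≥ a_m` and `b₁ ≥ … ≥ b_m` be
reals, all `< c`, such that `a` majorizes `b` and the decreasing vectors are
distinct.  Then `Q(x) := ∏_{j=1}^{m} (x − bⱼ)/(x − aⱼ)` has negative derivative at
every `x ∈ [c, d]`. -/
theorem quotient_of_majorizing_roots_decreasing
    (m : ℕ) (hm : 2 ≤ m) (c d : ℝ) (hcd : c ≤ d) (a b : Fin m → ℝ)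
    (ha : Antitone a) (hb : Antitone b)
    (hac : ∀ j, a j < c) (hbc : ∀ j, b j < c)
    (hmaj : ∀ k ≤ m,
      ∑ j ∈ univ.filter (fun j : Fin m => (j : ℕ) < k), b j ≤
        ∑ j ∈ univ.filter (fun j : Fin m => (j : ℕ) < k), a j)
    (htot : ∑ j, a j = ∑ j, b j)
    (hne : a ≠ b) :
    ∀ x ∈ Set.Icc c d, ∃ Q' : ℝ,
      HasDerivAt (fun y => ∏ j, (y - b j) / (y - a j)) Q' x ∧ Q' < 0 := by
  intro x hx
  obtain ⟨hcx, _⟩ := hx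
  have hA : ∀ j, 0 < x - a j := fun j => sub_pos.2 ((hac j).trans_le hcx)
  have hB : ∀ j, 0 < x - b j := fun j => sub_pos.2 ((hbc j).trans_le hcx)
  -- derivative of each factor
  have hder : ∀ j ∈ (univ : Finset (Fin m)),
      HasDerivAt (fun y => (y - b j) / (y - a j))
        ((1 * (x - a j) - (x - b j) * 1) / (x - a j) ^ 2) x := by
    intro j _
    exact ((hasDerivAt_id x).sub_const (b j)).div
      ((hasDerivAt_id x).sub_const (a j)) (hA j).ne'
  have hQ := HasDerivAt.fun_finsetProd hder
  refine ⟨_, hQ, ?_⟩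
  set Q : ℝ := ∏ j, (x - b j) / (x - a j) with hQdef
  have hQpos : 0 < Q := Finset.prod_pos fun j _ => div_pos (hB j) (hA j)
  -- rewrite each term of the derivative sum
  have hterm : ∀ j : Fin m,
      (∏ k ∈ univ.erase j, (x - b k) / (x - a k)) •
          ((1 * (x - a j) - (x - b j) * 1) / (x - a j) ^ 2)
        = Q * ((b j - a j) / ((x - a j) * (x - b j))) := by
    intro j
    have hAj := (hA j).ne'
    have hBj := (hB j).ne'
    have hg : (1 * (x - a j) - (x - b j) * 1) / (x - a j) ^ 2
        = (x - b j) / (x - a j) * ((b j - a j) / ((x - a j) * (x - b j))) := by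
      field_simp
      ring
    have hprod : (x - b j) / (x - a j) *
        (∏ k ∈ univ.erase j, (x - b k) / (x - a k)) = Q :=
      Finset.mul_prod_erase univ (fun k => (x - b k) / (x - a k))
        (Finset.mem_univ j)
    rw [smul_eq_mul, hg, ← hprod]
    ring
  rw [show (∑ j, (∏ k ∈ univ.erase j, (x - b k) / (x - a k)) •
        ((1 * (x - a j) - (x - b j) * 1) / (x - a j) ^ 2))
      = Q * ∑ j, (b j - a j) / ((x - a j) * (x - b j)) by
    rw [Finset.mul_sum]; exact Finset.sum_congr rfl fun j _ => hterm j]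
  -- it remains to show the sum is negative
  apply mul_neg_of_pos_of_neg hQpos
  rw [← neg_pos, ← Finset.sum_neg_distrib]
  have hid : ∀ j : Fin m, -((b j - a j) / ((x - a j) * (x - b j)))
      = (a j - b j) / (x - b j) ^ 2
        + (a j - b j) ^ 2 / ((x - a j) * (x - b j) ^ 2) := by
    intro j
    have hAj := (hA j).ne'
    have hBj := (hB j).ne'
    field_simp
    ring
  rw [Finset.sum_congr rfl fun j _ => hid j, Finset.sum_add_distrib]
  -- the second sum is positive since `a ≠ b`
  obtain ⟨j0, hj0⟩ : ∃ j, a j ≠ b j := Function.ne_iff.mp hne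
  have hpos2 : 0 < ∑ j, (a j - b j) ^ 2 / ((x - a j) * (x - b j) ^ 2) := by
    apply Finset.sum_pos' (fun j _ =>
      div_nonneg (sq_nonneg _) (mul_nonneg (hA j).le (sq_nonneg _)))
    refine ⟨j0, Finset.mem_univ j0, ?_⟩
    have hne0 : a j0 - b j0 ≠ 0 := sub_ne_zero.mpr hj0
    exact div_pos (lt_of_le_of_ne (sq_nonneg _) (Ne.symm (pow_ne_zero 2 hne0)))
      (mul_pos (hA j0) (pow_pos (hB j0) 2))
  -- the first sum is nonnegative by Abel summation and majorization
  have hpos1 : 0 ≤ ∑ j, (a j - b j) / (x - b j) ^ 2 := by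
    set cc : ℕ → ℝ := fun i => if h : i < m then 1 / (x - b ⟨i, h⟩) ^ 2 else 0
      with hcc
    set dd : ℕ → ℝ := fun i => if h : i < m then a ⟨i, h⟩ - b ⟨i, h⟩ else 0
      with hdd
    have hfil : ∀ (f : Fin m → ℝ) (k : ℕ), k ≤ m →
        ∑ j ∈ univ.filter (fun j : Fin m => (j : ℕ) < k), f j
          = ∑ i ∈ range k, (if h : i < m then f ⟨i, h⟩ else 0) := by
      intro f k hk
      rw [Finset.sum_filter]
      have h1 : ∑ j : Fin m, (if (j : ℕ) < k then f j else 0)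
          = ∑ i ∈ range m, (if i < k then (if h : i < m then f ⟨i, h⟩ else 0)
              else 0) := by
        rw [← Fin.sum_univ_eq_sum_range]
        exact Finset.sum_congr rfl fun j _ => by simp [j.is_lt]
      rw [h1, ← Finset.sum_filter]
      have h2 : (range m).filter (· < k) = range k := by
        ext i; simp; omega
      rw [h2]
    have hfull : (univ.filter (fun j : Fin m => (j : ℕ) < m))
        = (univ : Finset (Fin m)) := by
      ext j; simp [j.is_lt]
    have hSm : ∑ j ∈ range m, dd j = 0 := by
      have e := hfil (fun j => a j - b j) m le_rfl
      rw [hfull, Finset.sum_sub_distrib, htot, sub_self] at e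
      exact e.symm
    have hS : ∀ k ≤ m, 0 ≤ ∑ j ∈ range k, dd j := by
      intro k hk
      have e := (hfil (fun j => a j - b j) k hk).symm
      rw [e, Finset.sum_sub_distrib, sub_nonneg]
      exact hmaj k hk
    have hmono : ∀ i, cc (i + 1) ≤ cc i := by
      intro i
      by_cases h1 : i + 1 < m
      · have h0 : i < m := by omega
        simp only [hcc, dif_pos h1, dif_pos h0]
        have hle : b ⟨i + 1, h1⟩ ≤ b ⟨i, h0⟩ := hb (by simp [Fin.le_def])
        have hx1 : 0 < x - b ⟨i, h0⟩ := hB _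
        have hx2 : x - b ⟨i, h0⟩ ≤ x - b ⟨i + 1, h1⟩ := by linarith
        apply one_div_le_one_div_of_le (by positivity)
        exact pow_le_pow_left₀ hx1.le hx2 2
      · by_cases h0 : i < m
        · simp only [hcc, dif_neg h1, dif_pos h0]
          positivity
        · simp [hcc, dif_neg h1, dif_neg h0]
    have habel := abel_sum_nonneg m cc dd hmono hS hSm
    have e2 : ∑ j ∈ range m, cc j * dd j = ∑ j, (a j - b j) / (x - b j) ^ 2 := by
      rw [← Fin.sum_univ_eq_sum_range (fun i => cc i * dd i) m]
      refine Finset.sum_congr rfl fun j _ => ?_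
      simp only [hcc, hdd, dif_pos j.is_lt, Fin.eta]
      ring
    rw [← e2]; exact habel
  linarith
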